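/- Let S be a nonempty set of points (i, y) with i ∈ ℝ, i ≥ 0 and y ∈ ℝ, y ≥ 0. Let N : {x : ℝ // 0 ≤ x} → ℝ be a nonincreasing convex function with N(i) ≤ y for all (i, y) ∈ S, which is the greatest such function: every nonincreasing convex M : {x : ℝ // 0 ≤ x} → ℝ with M(i) ≤ y for all (i, y) ∈ S satisfies M ≤ N pointwise. Then for every real s > 0, the infimal Legendre transform of N at s equals the infimum over the points: ⨅_{x ≥ 0} (N(x) + s·x) = ⨅_{(i,y) ∈ S} (y + s·i). -/
import Mathlib


/-- if `N` is the nonincreasing lower convex envelope (Newton polygon) of a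
nonempty set `S` of points `(i, y)` with `i, y ≥ 0`, then for every `s > 0` the infimal
Legendre transform of `N` at `s` equals the infimum of `y + s·i` over the points
`(i, y) ∈ S`. -/
theorem legendre_of_newtonPolygon_eq_inf_over_points
    (S : Set (ℝ × ℝ)) (hS : S.Nonempty)
    (hSnn : ∀ q ∈ S, 0 ≤ q.1 ∧ 0 ≤ q.2)
    (N : ℝ → ℝ)
    (hconv : ConvexOn ℝ (Set.Ici (0 : ℝ)) N)
    (hanti : AntitoneOn N (Set.Ici (0 : ℝ)))
    (hle : ∀ q ∈ S, N q.1 ≤ q.2)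
    (hgreatest : ∀ M : ℝ → ℝ, ConvexOn ℝ (Set.Ici (0 : ℝ)) M →
      AntitoneOn M (Set.Ici (0 : ℝ)) → (∀ q ∈ S, M q.1 ≤ q.2) →
      ∀ x ∈ Set.Ici (0 : ℝ), M x ≤ N x)
    (s : ℝ) (hs : 0 < s) :
    sInf ((fun x : ℝ => N x + s * x) '' Set.Ici (0 : ℝ)) =
      sInf ((fun q : ℝ × ℝ => q.2 + s * q.1) '' S) := by
  set c := sInf ((fun q : ℝ × ℝ => q.2 + s * q.1) '' S) with hc
  have hBne : ((fun q : ℝ × ℝ => q.2 + s * q.1) '' S).Nonempty := hS.image _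
  have hBbdd : BddBelow ((fun q : ℝ × ℝ => q.2 + s * q.1) '' S) := by
    refine ⟨0, ?_⟩
    rintro b ⟨q, hq, rfl⟩
    obtain ⟨h1, h2⟩ := hSnn q hq
    positivity
  have hcle : ∀ q ∈ S, c ≤ q.2 + s * q.1 := fun q hq =>
    csInf_le hBbdd ⟨q, hq, rfl⟩
  -- the affine comparison function
  have hM : ∀ x ∈ Set.Ici (0 : ℝ), c - s * x ≤ N x := by
    refine hgreatest (fun x => c - s * x) ?_ ?_ ?_
    · refine ⟨convex_Ici 0, ?_⟩
      intro x _ y _ a b ha hb hab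
      simp only [smul_eq_mul]
      have heq : a * (c - s * x) + b * (c - s * y) = c - s * (a * x + b * y) := by
        linear_combination c * hab
      linarith
    · intro a _ b _ hab
      have hsa : s * a ≤ s * b := by nlinarith
      show c - s * b ≤ c - s * a
      linarith
    · intro q hq
      have := hcle q hq
      show c - s * q.1 ≤ q.2
      linarith
  have hlower : ∀ x ∈ Set.Ici (0 : ℝ), c ≤ N x + s * x := by
    intro x hx
    have := hM x hx
    linarith
  have hAne : ((fun x : ℝ => N x + s * x) '' Set.Ici (0 : ℝ)).Nonempty :=
    ⟨N 0 + s * 0, 0, Set.mem_Ici.mpr le_rfl, rfl⟩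
  have hAbdd : BddBelow ((fun x : ℝ => N x + s * x) '' Set.Ici (0 : ℝ)) := by
    refine ⟨c, ?_⟩
    rintro a ⟨x, hx, rfl⟩
    exact hlower x hx
  apply le_antisymm
  · refine le_csInf hBne ?_
    rintro b ⟨q, hq, rfl⟩
    calc sInf ((fun x : ℝ => N x + s * x) '' Set.Ici (0 : ℝ))
        ≤ N q.1 + s * q.1 := csInf_le hAbdd ⟨q.1, (hSnn q hq).1, rfl⟩
      _ ≤ q.2 + s * q.1 := by have := hle q hq; linarith
  · refine le_csInf hAne ?_
    rintro a ⟨x, hx, rfl⟩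
    exact hlower x hx
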